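/- Let Y be a Poisson random variable with parameter λ, where 0 < λ ≤ α. Then for every t ≥ α(e² − 3), one has P(Y − λ ≥ t) ≤ e^{−t}. -/

import Mathlib

open MeasureTheory ProbabilityTheory Real

/-- Tail bound for a Poisson random variable (Lemma 1): if `Y ~ Poisson(λ)` with
`0 < λ ≤ α`, then `P(Y − λ ≥ t) ≤ e^{−t}` for all `t ≥ α(e² − 3)`. -/
theorem poisson_tail_bound (α lam t : ℝ) (hlam : 0 < lam) (hle : lam ≤ α)
    (ht : α * (Real.exp 2 - 3) ≤ t) :
    poissonMeasure lam.toNNReal {k : ℕ | t ≤ (k : ℝ) - lam} ≤ ENNReal.ofReal (Real.exp (-t)) := by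
  have hx : (0:ℝ) ≤ lam := hlam.le
  have hlam' : (lam.toNNReal : ℝ) = lam := Real.coe_toNNReal _ hx
  set S : Set ℕ := {k : ℕ | t ≤ (k : ℝ) - lam} with hS
  have hmeas : MeasurableSet S := MeasurableSet.of_discrete
  set c : ℝ := Real.exp (-(3 * lam) - 2 * t) with hc
  set x : ℝ := lam * Real.exp 2 with hxdef
  have key : ∀ k : ℕ, S.indicator (⇑(poissonPMF lam.toNNReal)) k ≤
      ENNReal.ofReal (c * x ^ k / k.factorial) := by
    intro k
    by_cases hk : k ∈ S
    · rw [Set.indicator_of_mem hk]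
      show ENNReal.ofReal (ProbabilityTheory.poissonPMFReal _ k) ≤ _
      apply ENNReal.ofReal_le_ofReal
      rw [ProbabilityTheory.poissonPMFReal, hlam']
      have hK : t ≤ (k : ℝ) - lam := hk
      have h1 : (1:ℝ) ≤ Real.exp (2 * ((k:ℝ) - lam - t)) := by
        rw [← Real.exp_zero]
        exact Real.exp_le_exp.mpr (by nlinarith)
      have heq : c * x ^ k / k.factorial
          = (Real.exp (-lam) * lam ^ k / k.factorial) * Real.exp (2 * ((k:ℝ) - lam - t)) := by
        rw [hc, hxdef, mul_pow, ← Real.exp_nat_mul]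
        rw [div_mul_eq_mul_div, div_eq_div_iff (by positivity) (by positivity)]
        rw [show rexp (-(3 * lam) - 2 * t) * (lam ^ k * rexp (↑k * 2)) =
          lam ^ k * (rexp (-(3 * lam) - 2 * t) * rexp (↑k * 2)) by ring,
          show rexp (-lam) * lam ^ k * rexp (2 * (↑k - lam - t)) =
          lam ^ k * (rexp (-lam) * rexp (2 * (↑k - lam - t))) by ring,
          ← Real.exp_add, ← Real.exp_add]
        ring_nf
      rw [heq]
      have hpos : (0:ℝ) ≤ Real.exp (-lam) * lam ^ k / k.factorial := by positivity
      nlinarith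
    · rw [Set.indicator_of_notMem hk]; exact zero_le
  have hsum : HasSum (fun k : ℕ ↦ c * x ^ k / k.factorial) (c * Real.exp x) := by
    have h := NormedSpace.expSeries_div_hasSum_exp x
    rw [← Real.exp_eq_exp_ℝ] at h
    simpa [mul_div_assoc] using h.mul_left c
  calc poissonMeasure lam.toNNReal S
      = ∑' k : ℕ, S.indicator (⇑(poissonPMF lam.toNNReal)) k := by
        rw [poissonMeasure, Measure.sum_apply _ hmeas]
        congr 1; ext n
        rw [Measure.smul_apply, Measure.dirac_apply' _ hmeas, smul_eq_mul]
        by_cases hn : n ∈ S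
        · simp [hn, ← poissonPMFReal_ofReal_eq_poissonPMF, poissonPMFReal]
        · simp [hn]
    _ ≤ ∑' k : ℕ, ENNReal.ofReal (c * x ^ k / k.factorial) := ENNReal.tsum_le_tsum key
    _ = ENNReal.ofReal (c * Real.exp x) := by
        rw [← ENNReal.ofReal_tsum_of_nonneg (fun k ↦ by positivity) hsum.summable,
          hsum.tsum_eq]
    _ ≤ ENNReal.ofReal (Real.exp (-t)) := by
        apply ENNReal.ofReal_le_ofReal
        rw [hc, ← Real.exp_add]
        apply Real.exp_le_exp.mpr
        have he3 : (3:ℝ) ≤ Real.exp 2 := by nlinarith [Real.add_one_le_exp (2:ℝ)]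
        have : lam * (Real.exp 2 - 3) ≤ α * (Real.exp 2 - 3) :=
          mul_le_mul_of_nonneg_right hle (by linarith)
        rw [hxdef]; nlinarith
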